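/- Let p ∈ (0,1), |ψ⟩ = √p|0⟩ + √(1−p)|1⟩, ρ₀ = |ψ⟩⟨ψ|, and ρ₁ = ½I the maximally mixed qubit state. For ε ∈ (0,1) and n ≥ 1, let β_n(ε) = inf{ Tr(Z[ρ₁^{⊗n}] E) : E Hermitian on (ℂ²)^{⊗n}, 0 ≤ E ≤ I, Tr(Z[ρ₀^{⊗n}] E) ≥ 1−ε } and D_H^ε(Z[ρ₀^{⊗n}] || Z[ρ₁^{⊗n}]) = −log₂ β_n(ε). Then lim_{n→∞} D_H^ε(Z[ρ₀^{⊗n}] || Z[ρ₁^{⊗n}]) / n = 1. -/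

import Mathlib

open Matrix Complex Set Filter

noncomputable section

/-- Number of 1s in a bit string. -/
def ones {n : ℕ} (x : Fin n → Fin 2) : ℕ := (Finset.univ.filter fun i => x i = 1).card

/-- The `n`-fold tensor power of a one-qubit operator, as a matrix indexed by bit strings. -/
def mpow (n : ℕ) (ρ : Matrix (Fin 2) (Fin 2) ℂ) :
    Matrix (Fin n → Fin 2) (Fin n → Fin 2) ℂ :=
  Matrix.of fun x y => ∏ i, ρ (x i) (y i)

/-- The parity operator ω = σ_z^{⊗n}: it multiplies a computational basis vector by
(-1)^(number of 1s). -/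
def parityOp (n : ℕ) : Matrix (Fin n → Fin 2) (Fin n → Fin 2) ℂ :=
  Matrix.diagonal fun x => (-1 : ℂ) ^ ones x

/-- The ℤ₂-twirling Z[X] = ½ (X + ωXω). -/
def twirl {n : ℕ} (X : Matrix (Fin n → Fin 2) (Fin n → Fin 2) ℂ) :
    Matrix (Fin n → Fin 2) (Fin n → Fin 2) ℂ :=
  (2 : ℂ)⁻¹ • (X + parityOp n * X * parityOp n)

/-- Rank-one projection |ψ⟩⟨ψ| on one qubit. -/
def projv (ψ : Fin 2 → ℂ) : Matrix (Fin 2) (Fin 2) ℂ := vecMulVec ψ (star ψ)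

/-- Rank-one projection |ψ⟩⟨ψ| on n qubits. -/
def projN {n : ℕ} (ψ : (Fin n → Fin 2) → ℂ) :
    Matrix (Fin n → Fin 2) (Fin n → Fin 2) ℂ := vecMulVec ψ (star ψ)

def ket0 : Fin 2 → ℂ := ![1, 0]

def ket1 : Fin 2 → ℂ := ![0, 1]

/-- The qubit state √p |0⟩ + e^{iφ} √(1-p) |1⟩. -/
def qubit (p φ : ℝ) : Fin 2 → ℂ :=
  ![(Real.sqrt p : ℂ), Complex.exp (Complex.I * φ) * (Real.sqrt (1 - p) : ℂ)]

/-- The qubit state √p |0⟩ + √(1-p) |1⟩. -/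
def qubitR (p : ℝ) : Fin 2 → ℂ := ![(Real.sqrt p : ℂ), (Real.sqrt (1 - p) : ℂ)]

open scoped ComplexOrder

/-- The set of type-II error probabilities Tr(σ₁ E) over POVM elements 0 ≤ E ≤ I
(Loewner order) whose type-I error is at most ε, i.e. Tr(σ₀ E) ≥ 1-ε. -/
def errSet (n : ℕ) (σ0 σ1 : Matrix (Fin n → Fin 2) (Fin n → Fin 2) ℂ) (ε : ℝ) : Set ℝ :=
  { x | ∃ E : Matrix (Fin n → Fin 2) (Fin n → Fin 2) ℂ,
      E.IsHermitian ∧ E.PosSemidef ∧ (1 - E).PosSemidef ∧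
      1 - ε ≤ ((σ0 * E).trace).re ∧ x = ((σ1 * E).trace).re }

/-- The maximally mixed qubit state ½ I. -/
def mmix : Matrix (Fin 2) (Fin 2) ℂ := (2 : ℂ)⁻¹ • 1


section generic
set_option linter.unusedSectionVars false
variable {m : Type*} [Fintype m] [DecidableEq m]


lemma star_dot (u x : m → ℂ) : star x ⬝ᵥ u = (starRingEnd ℂ) (star u ⬝ᵥ x) := by
  simp [dotProduct, map_sum, mul_comm]

lemma myHerm (u : m → ℂ) : (vecMulVec u (star u)).IsHermitian := by
  ext i j
  simp [vecMulVec_apply, conjTranspose_apply, mul_comm]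

lemma myMulVec (u v x : m → ℂ) : vecMulVec u v *ᵥ x = (v ⬝ᵥ x) • u := by
  ext i
  simp only [vecMulVec_apply, mulVec, dotProduct, Pi.smul_apply, smul_eq_mul, Finset.sum_mul,
    Finset.mul_sum]
  exact Finset.sum_congr rfl fun j _ => by ring

lemma myMul (u v w z : m → ℂ) :
    vecMulVec u v * vecMulVec w z = (v ⬝ᵥ w) • vecMulVec u z := by
  ext i j
  simp only [vecMulVec_apply, mul_apply, dotProduct, Matrix.smul_apply, smul_eq_mul, Finset.sum_mul,
    Finset.mul_sum]
  exact Finset.sum_congr rfl fun k _ => by ring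

lemma myTrace (u v : m → ℂ) : (vecMulVec u v).trace = v ⬝ᵥ u := by
  simp [trace, Matrix.diag, vecMulVec_apply, dotProduct, mul_comm]

lemma quadform (u x : m → ℂ) :
    star x ⬝ᵥ (vecMulVec u (star u) *ᵥ x) = (Complex.normSq (star u ⬝ᵥ x) : ℂ) := by
  rw [myMulVec, dotProduct_smul, smul_eq_mul, star_dot u x, Complex.mul_conj]

lemma dot_self_real (x : m → ℂ) : star x ⬝ᵥ x = ((∑ i, normSq (x i) : ℝ) : ℂ) := by
  push_cast
  simp [dotProduct, Complex.normSq_eq_conj_mul_self]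

lemma key_ineq (u v x : m → ℂ) (c : ℝ)
    (huu : star u ⬝ᵥ u = 1) (hvv : star v ⬝ᵥ v = 1)
    (huv : star u ⬝ᵥ v = (c:ℂ)) (hvu : star v ⬝ᵥ u = (c:ℂ)) :
    (1+|c|)⁻¹ * (normSq (star u ⬝ᵥ x) + normSq (star v ⬝ᵥ x)) ≤ ∑ i, normSq (x i) := by
  set α := star u ⬝ᵥ x with hα
  set β := star v ⬝ᵥ x with hβ
  have hcpos : (0:ℝ) < 1 + |c| := by positivity
  set s : ℝ := (1+|c|)⁻¹ with hs
  have hs0 : 0 ≤ s := by rw [hs]; positivity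
  set w : m → ℂ := (s:ℂ) • (α • u + β • v) with hw
  have hsw : star w = (s:ℂ) • ((starRingEnd ℂ) α • star u + (starRingEnd ℂ) β • star v) := by
    simp [hw, star_smul, star_add, Complex.star_def]
  have hxw : star x ⬝ᵥ w = ((s * (normSq α + normSq β) : ℝ) : ℂ) := by
    rw [hw, dotProduct_smul, dotProduct_add, dotProduct_smul, dotProduct_smul,
      star_dot u x, star_dot v x, ← hα, ← hβ]
    push_cast [Complex.normSq_eq_conj_mul_self]
    simp only [smul_eq_mul]
    ring
  have hwx : star w ⬝ᵥ x = ((s * (normSq α + normSq β) : ℝ) : ℂ) := by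
    rw [hsw, smul_dotProduct, add_dotProduct, smul_dotProduct, smul_dotProduct, ← hα, ← hβ]
    push_cast [Complex.normSq_eq_conj_mul_self]
    simp only [smul_eq_mul]
    try ring
  have hww : star w ⬝ᵥ w
      = ((s^2:ℝ):ℂ) * ((normSq α + normSq β : ℝ) + (c:ℂ) * ((starRingEnd ℂ) α * β + (starRingEnd ℂ) β * α)) := by
    rw [hsw, hw, smul_dotProduct, dotProduct_smul, add_dotProduct, smul_dotProduct, smul_dotProduct,
      dotProduct_add, dotProduct_add, dotProduct_smul, dotProduct_smul, dotProduct_smul, dotProduct_smul,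
      huu, hvv, huv, hvu]
    push_cast [Complex.normSq_eq_conj_mul_self]
    simp only [smul_eq_mul]
    ring
  have h0 : (0:ℝ) ≤ (star (x - w) ⬝ᵥ (x - w)).re := by
    rw [dot_self_real, Complex.ofReal_re]
    exact Finset.sum_nonneg fun i _ => Complex.normSq_nonneg _
  have hexp : star (x - w) ⬝ᵥ (x - w)
      = star x ⬝ᵥ x - star x ⬝ᵥ w - star w ⬝ᵥ x + star w ⬝ᵥ w := by
    rw [star_sub, sub_dotProduct, dotProduct_sub, dotProduct_sub]
    ring
  set S : ℝ := normSq α + normSq β with hS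
  set r : ℝ := ((starRingEnd ℂ) α * β).re with hr
  have hconj : (starRingEnd ℂ) β * α = (starRingEnd ℂ) ((starRingEnd ℂ) α * β) := by
    rw [RingHom.map_mul, Complex.conj_conj]; ring
  have hrr : ((starRingEnd ℂ) α * β + (starRingEnd ℂ) β * α).re = 2 * r := by
    rw [Complex.add_re, hconj, Complex.conj_re, hr]; ring
  have him2 : ((starRingEnd ℂ) α * β + (starRingEnd ℂ) β * α).im = 0 := by
    rw [Complex.add_im, hconj, Complex.conj_im]; ring
  have hX : (star x ⬝ᵥ x).re = ∑ i, normSq (x i) := by rw [dot_self_real, Complex.ofReal_re]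
  have h0' : (0:ℝ) ≤ ∑ i, normSq (x i) - 2 * (s * S) + s^2 * (S + c * (2*r)) := by
    have hh := h0
    rw [hexp] at hh
    have him : (((S:ℝ):ℂ) + (c:ℂ) * ((starRingEnd ℂ) α * β + (starRingEnd ℂ) β * α)).re
        = S + c * (2*r) := by
      simp only [Complex.add_re, Complex.ofReal_re, Complex.mul_re, Complex.ofReal_im, hrr,
        him2]
      ring
    simp only [Complex.add_re, Complex.sub_re, hX, hxw, hwx, hww, Complex.ofReal_re,
      Complex.mul_re, Complex.ofReal_im, zero_mul, sub_zero, him] at hh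
    linarith [hh]
  have habs : |r| ≤ Real.sqrt (normSq α) * Real.sqrt (normSq β) := by
    calc |r| ≤ ‖(starRingEnd ℂ) α * β‖ := Complex.abs_re_le_norm _
    _ = ‖α‖ * ‖β‖ := by rw [norm_mul, Complex.norm_conj]
    _ = _ := by rw [Complex.norm_def, Complex.norm_def]
  have hna : Real.sqrt (normSq α) ^ 2 = normSq α := Real.sq_sqrt (normSq_nonneg _)
  have hnb : Real.sqrt (normSq β) ^ 2 = normSq β := Real.sq_sqrt (normSq_nonneg _)
  have hSnn : 0 ≤ S := by rw [hS]; exact add_nonneg (normSq_nonneg _) (normSq_nonneg _)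
  have hcr : 2 * (c * r) ≤ |c| * S := by
    have h1 : c * r ≤ |c| * |r| := by
      calc c * r ≤ |c * r| := le_abs_self _
      _ = |c| * |r| := abs_mul _ _
    have h2 : 2 * (Real.sqrt (normSq α) * Real.sqrt (normSq β)) ≤ S := by
      rw [hS]
      nlinarith [sq_nonneg (Real.sqrt (normSq α) - Real.sqrt (normSq β))]
    nlinarith [abs_nonneg c, abs_nonneg r, Real.sqrt_nonneg (normSq α), Real.sqrt_nonneg (normSq β)]
  have hs1 : s * (1 + |c|) = 1 := inv_mul_cancel₀ (ne_of_gt hcpos)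
  have hfin : s^2 * (S + c * (2*r)) ≤ s * S := by
    have h2 : s^2 * (S + c * (2*r)) ≤ s^2 * ((1+|c|) * S) := by
      nlinarith [sq_nonneg s, hcr]
    calc s^2 * (S + c * (2*r)) ≤ s^2 * ((1+|c|) * S) := h2
    _ = (s * (1+|c|)) * (s * S) := by ring
    _ = s * S := by rw [hs1, one_mul]
  linarith [h0', hfin]

lemma herm_E (u v : m → ℂ) (t : ℝ) :
    ((t:ℂ) • (vecMulVec u (star u) + vecMulVec v (star v))).IsHermitian := by
  ext i j
  simp only [conjTranspose_apply, Matrix.smul_apply, Matrix.add_apply, vecMulVec_apply,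
    Pi.star_apply, star_apply, map_add, RingHom.map_mul, Complex.conj_conj, Complex.star_def,
    Complex.conj_ofReal, smul_eq_mul]
  ring

lemma form_E (u v x : m → ℂ) (t : ℝ) :
    star x ⬝ᵥ (((t:ℂ) • (vecMulVec u (star u) + vecMulVec v (star v))) *ᵥ x)
      = ((t * (normSq (star u ⬝ᵥ x) + normSq (star v ⬝ᵥ x)) : ℝ) : ℂ) := by
  rw [smul_mulVec, add_mulVec, dotProduct_smul, dotProduct_add, quadform, quadform]
  push_cast
  simp only [smul_eq_mul]
  try ring

lemma psd_E (u v : m → ℂ) (t : ℝ) (ht : 0 ≤ t) :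
    ((t:ℂ) • (vecMulVec u (star u) + vecMulVec v (star v))).PosSemidef := by
  refine Matrix.PosSemidef.of_dotProduct_mulVec_nonneg (herm_E u v t) fun x => ?_
  rw [form_E]
  rw [Complex.zero_le_real]
  exact mul_nonneg ht (add_nonneg (normSq_nonneg _) (normSq_nonneg _))

lemma psd_one_sub_E (u v : m → ℂ) (c t : ℝ)
    (huu : star u ⬝ᵥ u = 1) (hvv : star v ⬝ᵥ v = 1)
    (huv : star u ⬝ᵥ v = (c:ℂ)) (hvu : star v ⬝ᵥ u = (c:ℂ))
    (ht0 : 0 ≤ t) (ht1 : t * (1+|c|) ≤ 1) :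
    ((1 : Matrix m m ℂ) - (t:ℂ) • (vecMulVec u (star u) + vecMulVec v (star v))).PosSemidef := by
  refine Matrix.PosSemidef.of_dotProduct_mulVec_nonneg (Matrix.isHermitian_one.sub (herm_E u v t)) fun x => ?_
  rw [sub_mulVec, dotProduct_sub, one_mulVec, form_E, dot_self_real]
  rw [← Complex.ofReal_sub, Complex.zero_le_real, sub_nonneg]
  have hcpos : (0:ℝ) < 1 + |c| := by positivity
  have hts : t ≤ (1+|c|)⁻¹ := by
    rw [← one_div]
    exact (le_div_iff₀ hcpos).mpr ht1
  calc t * (normSq (star u ⬝ᵥ x) + normSq (star v ⬝ᵥ x))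
      ≤ (1+|c|)⁻¹ * (normSq (star u ⬝ᵥ x) + normSq (star v ⬝ᵥ x)) := by
        exact mul_le_mul_of_nonneg_right hts
          (add_nonneg (normSq_nonneg _) (normSq_nonneg _))
    _ ≤ _ := key_ineq u v x c huu hvv huv hvu

lemma psd_trace_re_nonneg {M : Matrix m m ℂ} (hM : M.PosSemidef) : 0 ≤ M.trace.re := by
  rw [Matrix.trace, Complex.re_sum]
  refine Finset.sum_nonneg fun i _ => ?_
  have h := hM.dotProduct_mulVec_nonneg (Pi.single i 1)
  have : star (Pi.single i 1) ⬝ᵥ (M *ᵥ Pi.single i (1:ℂ)) = M i i := by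
    simp [mulVec_single, dotProduct, Pi.single_apply, star_apply]
  rw [this] at h
  exact (Complex.le_def.mp h).1

lemma psd_mul_trace_re_nonneg {P Q : Matrix m m ℂ} (hP : P.PosSemidef) (hQ : Q.PosSemidef) :
    0 ≤ ((P * Q).trace).re := by
  open scoped MatrixOrder in
  obtain ⟨B, rfl⟩ := CStarAlgebra.nonneg_iff_eq_star_mul_self.mp hP.nonneg
  rw [star_eq_conjTranspose]
  rw [Matrix.mul_assoc, Matrix.trace_mul_comm]
  exact psd_trace_re_nonneg (hQ.mul_mul_conjTranspose_same B)

end generic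

-- ### spec section
section spec
variable (p : ℝ) (n : ℕ)

/-- tensor power vector -/
def tA : (Fin n → Fin 2) → ℂ := fun x => ∏ i, qubitR p (x i)

/-- parity-flipped tensor power vector -/
def tB : (Fin n → Fin 2) → ℂ := fun x => (-1 : ℂ) ^ (ones x) * ∏ i, qubitR p (x i)

lemma sum_prod_fn (g : Fin 2 → ℂ) :
    ∑ x : Fin n → Fin 2, ∏ i, g (x i) = (∑ v, g v) ^ n := by
  have h := Finset.prod_univ_sum (fun _ : Fin n => (Finset.univ : Finset (Fin 2)))
    (fun _ j => g j)
  rw [Fintype.piFinset_univ] at h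
  rw [← h, Finset.prod_const, Finset.card_univ, Fintype.card_fin]

lemma ones_sum (x : Fin n → Fin 2) : ones x = ∑ i, ((x i : ℕ)) := by
  unfold ones
  rw [Finset.card_filter]
  refine Finset.sum_congr rfl fun i _ => ?_
  have h2 : ∀ j : Fin 2, (if j = 1 then 1 else 0) = (j : ℕ) := by decide
  exact h2 (x i)

lemma neg_one_pow_ones (x : Fin n → Fin 2) :
    ((-1 : ℂ)) ^ (ones x) = ∏ i, (-1 : ℂ) ^ ((x i : ℕ)) := by
  rw [ones_sum, Finset.prod_pow_eq_pow_sum]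

lemma conj_neg_one_pow (k : ℕ) : (starRingEnd ℂ) ((-1 : ℂ) ^ k) = (-1 : ℂ) ^ k := by
  simp

lemma mpow_projv : mpow n (projv (qubitR p)) = vecMulVec (tA p n) (star (tA p n)) := by
  ext x y
  simp only [mpow, Matrix.of_apply, projv, vecMulVec_apply, Pi.star_apply, Complex.star_def,
    tA, map_prod]
  rw [← Finset.prod_mul_distrib]

lemma parity_conj : parityOp n * vecMulVec (tA p n) (star (tA p n)) * parityOp n
    = vecMulVec (tB p n) (star (tB p n)) := by
  ext x y
  rw [parityOp, Matrix.mul_diagonal, Matrix.diagonal_mul]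
  simp only [vecMulVec_apply, Pi.star_apply, Complex.star_def, tA, tB]
  rw [RingHom.map_mul, conj_neg_one_pow]
  ring

lemma twirl_rho0 : twirl (mpow n (projv (qubitR p)))
    = (2:ℂ)⁻¹ • (vecMulVec (tA p n) (star (tA p n)) + vecMulVec (tB p n) (star (tB p n))) := by
  rw [twirl, mpow_projv, parity_conj]

lemma parity_sq : parityOp n * parityOp n = 1 := by
  rw [parityOp, diagonal_mul_diagonal]
  have : (fun x : Fin n → Fin 2 => (-1:ℂ) ^ ones x * (-1:ℂ) ^ ones x) = fun _ => 1 := by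
    funext x
    rw [← pow_add]
    exact Even.neg_one_pow ⟨ones x, rfl⟩
  rw [this, diagonal_one]

lemma mpow_mmix : mpow n mmix = ((2:ℂ)⁻¹) ^ n • 1 := by
  ext x y
  simp only [mpow, Matrix.of_apply, mmix, Matrix.smul_apply, smul_eq_mul]
  by_cases h : x = y
  · subst h
    simp only [Matrix.one_apply_eq, mul_one]
    rw [Finset.prod_congr rfl (fun i _ => ?_), Finset.prod_const, Finset.card_univ,
      Fintype.card_fin]
    · simp [Matrix.one_apply]
  · rw [Matrix.one_apply_ne h, mul_zero]
    obtain ⟨i, hi⟩ := Function.ne_iff.mp h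
    refine Finset.prod_eq_zero (Finset.mem_univ i) ?_
    simp [Matrix.one_apply, hi]

lemma twirl_mmix : twirl (mpow n mmix) = ((2:ℂ)⁻¹) ^ n • 1 := by
  rw [mpow_mmix, twirl]
  rw [Matrix.mul_smul, Matrix.smul_mul, Matrix.mul_one, parity_sq]
  rw [← two_smul ℂ (((2:ℂ)⁻¹) ^ n • (1 : Matrix (Fin n → Fin 2) (Fin n → Fin 2) ℂ)), smul_smul]
  norm_num

lemma dot_tensor (f g : Fin 2 → ℂ) :
    (fun x : Fin n → Fin 2 => ∏ i, f (x i)) ⬝ᵥ (fun x => ∏ i, g (x i))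
      = (∑ v, f v * g v) ^ n := by
  rw [dotProduct]
  rw [Finset.sum_congr rfl (fun x _ => (Finset.prod_mul_distrib).symm)]
  exact sum_prod_fn n (fun v => f v * g v)

lemma star_tA_eq : star (tA p n) = fun x => ∏ i, (starRingEnd ℂ) (qubitR p (x i)) := by
  funext x
  simp [tA, Pi.star_apply, Complex.star_def, map_prod]

lemma tB_eq : tB p n = fun x => ∏ i, ((-1 : ℂ) ^ ((x i : ℕ)) * qubitR p (x i)) := by
  funext x
  rw [tB, neg_one_pow_ones, ← Finset.prod_mul_distrib]

lemma star_tB_eq : star (tB p n)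
    = fun x => ∏ i, ((-1 : ℂ) ^ ((x i : ℕ)) * (starRingEnd ℂ) (qubitR p (x i))) := by
  funext x
  rw [Pi.star_apply, tB_eq, Complex.star_def, map_prod]
  refine Finset.prod_congr rfl fun i _ => ?_
  rw [RingHom.map_mul, conj_neg_one_pow]

variable (hp0 : 0 ≤ p) (hp1 : p ≤ 1)
include hp0 hp1

lemma sum_one : ∑ v : Fin 2, (starRingEnd ℂ) (qubitR p v) * qubitR p v = 1 := by
  rw [Fin.sum_univ_two]
  simp only [qubitR, Matrix.cons_val_zero, Matrix.cons_val_one, Matrix.head_cons,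
    Complex.conj_ofReal]
  rw [← Complex.ofReal_mul, ← Complex.ofReal_mul,
    Real.mul_self_sqrt hp0, Real.mul_self_sqrt (by linarith)]
  push_cast
  ring

lemma sum_c : ∑ v : Fin 2, (starRingEnd ℂ) (qubitR p v) * ((-1 : ℂ) ^ ((v : ℕ)) * qubitR p v)
    = ((2*p - 1 : ℝ) : ℂ) := by
  rw [Fin.sum_univ_two]
  simp only [qubitR, Matrix.cons_val_zero, Matrix.cons_val_one, Matrix.head_cons,
    Complex.conj_ofReal, Fin.val_zero, Fin.val_one, pow_zero, pow_one, one_mul]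
  have h1 : ((Real.sqrt p : ℂ)) * (Real.sqrt p : ℂ) = (p : ℂ) := by
    rw [← Complex.ofReal_mul, Real.mul_self_sqrt hp0]
  have h2 : ((Real.sqrt (1-p) : ℂ)) * (Real.sqrt (1-p) : ℂ) = ((1-p : ℝ) : ℂ) := by
    rw [← Complex.ofReal_mul, Real.mul_self_sqrt (by linarith)]
  push_cast
  push_cast at h1 h2
  linear_combination h1 - h2

lemma dot_AA : star (tA p n) ⬝ᵥ tA p n = 1 := by
  calc star (tA p n) ⬝ᵥ tA p n
      = (∑ v, (starRingEnd ℂ) (qubitR p v) * qubitR p v) ^ n := by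
        rw [star_tA_eq]
        exact dot_tensor n (fun v => (starRingEnd ℂ) (qubitR p v)) (qubitR p)
    _ = 1 := by rw [sum_one p hp0 hp1, one_pow]

lemma dot_AB : star (tA p n) ⬝ᵥ tB p n = (((2*p-1)^n : ℝ) : ℂ) := by
  calc star (tA p n) ⬝ᵥ tB p n
      = (∑ v : Fin 2, (starRingEnd ℂ) (qubitR p v) * ((-1:ℂ) ^ ((v:ℕ)) * qubitR p v)) ^ n := by
        rw [star_tA_eq, tB_eq]
        exact dot_tensor n (fun v => (starRingEnd ℂ) (qubitR p v))
          (fun v => (-1:ℂ) ^ ((v:ℕ)) * qubitR p v)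
    _ = _ := by rw [sum_c p hp0 hp1, ← Complex.ofReal_pow]

lemma dot_BA : star (tB p n) ⬝ᵥ tA p n = (((2*p-1)^n : ℝ) : ℂ) := by
  have hcast : (((2*p-1)^n : ℝ) : ℂ) = (((2*p-1 : ℝ) : ℂ)) ^ n := by push_cast; ring
  calc star (tB p n) ⬝ᵥ tA p n
      = (∑ v : Fin 2, ((-1:ℂ) ^ ((v:ℕ)) * (starRingEnd ℂ) (qubitR p v)) * qubitR p v) ^ n := by
        rw [star_tB_eq]
        exact dot_tensor n (fun v => (-1:ℂ) ^ ((v:ℕ)) * (starRingEnd ℂ) (qubitR p v)) (qubitR p)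
    _ = _ := by
        rw [hcast, ← sum_c p hp0 hp1]
        congr 1
        exact Finset.sum_congr rfl fun v _ => by ring

lemma dot_BB : star (tB p n) ⬝ᵥ tB p n = 1 := by
  have hsum : ∑ v : Fin 2, ((-1:ℂ)^((v:ℕ)) * (starRingEnd ℂ) (qubitR p v))
      * ((-1:ℂ)^((v:ℕ)) * qubitR p v) = 1 := by
    refine Eq.trans (Finset.sum_congr rfl fun v _ => ?_) (sum_one p hp0 hp1)
    have h1 : ((-1:ℂ)^((v:ℕ))) * ((-1:ℂ)^((v:ℕ))) = 1 := by
      rw [← pow_add]; exact Even.neg_one_pow ⟨(v:ℕ), rfl⟩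
    calc ((-1:ℂ)^((v:ℕ)) * (starRingEnd ℂ) (qubitR p v)) * ((-1:ℂ)^((v:ℕ)) * qubitR p v)
        = (((-1:ℂ)^((v:ℕ))) * ((-1:ℂ)^((v:ℕ)))) * ((starRingEnd ℂ) (qubitR p v) * qubitR p v) := by
          ring
      _ = (starRingEnd ℂ) (qubitR p v) * qubitR p v := by rw [h1, one_mul]
  calc star (tB p n) ⬝ᵥ tB p n
      = (∑ v : Fin 2, ((-1:ℂ) ^ ((v:ℕ)) * (starRingEnd ℂ) (qubitR p v))
          * ((-1:ℂ) ^ ((v:ℕ)) * qubitR p v)) ^ n := by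
        rw [star_tB_eq, tB_eq]
        exact dot_tensor n (fun v => (-1:ℂ) ^ ((v:ℕ)) * (starRingEnd ℂ) (qubitR p v))
          (fun v => (-1:ℂ) ^ ((v:ℕ)) * qubitR p v)
    _ = 1 := by rw [hsum, one_pow]

end spec


-- ### error-set bounds and main theorem
section main
variable (p ε : ℝ)

/-- Lower bound: every element of the error set is at least (1-ε)·2⁻ⁿ. -/
lemma errSet_lb (hp0 : 0 ≤ p) (hp1 : p ≤ 1) (n : ℕ) (x : ℝ)
    (hx : x ∈ errSet n (twirl (mpow n (projv (qubitR p)))) (twirl (mpow n mmix)) ε) :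
    (1 - ε) * ((2:ℝ)⁻¹)^n ≤ x := by
  obtain ⟨E, hherm, hpsd, hpsd1, hcon, rfl⟩ := hx
  set c : ℝ := (2*p-1)^n with hc
  have hcabs : |c| ≤ 1 := by
    rw [hc, _root_.abs_pow]
    refine pow_le_one₀ (abs_nonneg _) ?_
    rw [abs_le]; constructor <;> nlinarith
  -- σ₀ ≤ 1
  have hhalf : ((2:ℂ))⁻¹ = (((1/2 : ℝ)) : ℂ) := by norm_num
  have hσ0 : twirl (mpow n (projv (qubitR p)))
      = (((1/2:ℝ)):ℂ) • (vecMulVec (tA p n) (star (tA p n)) + vecMulVec (tB p n) (star (tB p n))) := by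
    rw [twirl_rho0, hhalf]
  have hpsd0 : ((1 : Matrix (Fin n → Fin 2) (Fin n → Fin 2) ℂ)
      - (((1/2:ℝ)):ℂ) • (vecMulVec (tA p n) (star (tA p n)) + vecMulVec (tB p n) (star (tB p n)))).PosSemidef := by
    refine psd_one_sub_E _ _ c _ (dot_AA p n hp0 hp1) (dot_BB p n hp0 hp1)
      (dot_AB p n hp0 hp1) (dot_BA p n hp0 hp1) (by norm_num) (by linarith)
  have htr : ((twirl (mpow n (projv (qubitR p))) * E).trace).re ≤ (E.trace).re := by
    have h0 : 0 ≤ ((((1 : Matrix (Fin n → Fin 2) (Fin n → Fin 2) ℂ)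
        - (((1/2:ℝ)):ℂ) • (vecMulVec (tA p n) (star (tA p n)) + vecMulVec (tB p n) (star (tB p n)))) * E).trace).re :=
      psd_mul_trace_re_nonneg hpsd0 hpsd
    rw [Matrix.sub_mul, Matrix.one_mul, Matrix.trace_sub, Complex.sub_re] at h0
    rw [hσ0]
    linarith
  have hval : ((twirl (mpow n mmix) * E).trace).re = ((2:ℝ)⁻¹)^n * (E.trace).re := by
    rw [twirl_mmix, Matrix.smul_mul, Matrix.one_mul, Matrix.trace_smul, smul_eq_mul]
    have : ((2:ℂ)⁻¹)^n = ((((2:ℝ)⁻¹)^n : ℝ) : ℂ) := by push_cast; ring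
    rw [this, Complex.re_ofReal_mul]
  rw [hval]
  have h2 : (1 - ε) ≤ (E.trace).re := le_trans hcon htr
  have h3 : (0:ℝ) < ((2:ℝ)⁻¹)^n := by positivity
  nlinarith

/-- Membership: the explicit POVM element gives the value 2⁻ⁿ·2t. -/
lemma errSet_mem (hp0 : 0 ≤ p) (hp1 : p ≤ 1) (hε1 : ε < 1) (n : ℕ)
    (hgood : 1 - ε ≤ (1 + |(2*p-1)^n|)⁻¹ * (1 + ((2*p-1)^n)^2)) :
    ((2:ℝ)⁻¹)^n * (2 * (1 + |(2*p-1)^n|)⁻¹)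
      ∈ errSet n (twirl (mpow n (projv (qubitR p)))) (twirl (mpow n mmix)) ε := by
  set c : ℝ := (2*p-1)^n with hc
  set t : ℝ := (1 + |c|)⁻¹ with ht
  have hcpos : (0:ℝ) < 1 + |c| := by positivity
  have ht0 : 0 ≤ t := by rw [ht]; positivity
  have ht1 : t * (1 + |c|) = 1 := inv_mul_cancel₀ (ne_of_gt hcpos)
  set PA := vecMulVec (tA p n) (star (tA p n)) with hPA
  set PB := vecMulVec (tB p n) (star (tB p n)) with hPB
  have hσ0 : twirl (mpow n (projv (qubitR p))) = (2:ℂ)⁻¹ • (PA + PB) := twirl_rho0 p n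
  have e1 : (PA * PA).trace = 1 := by
    rw [hPA, myMul, Matrix.trace_smul, myTrace, dot_AA p n hp0 hp1, smul_eq_mul, one_mul]
  have e4 : (PB * PB).trace = 1 := by
    rw [hPB, myMul, Matrix.trace_smul, myTrace, dot_BB p n hp0 hp1, smul_eq_mul, one_mul]
  have e2 : (PA * PB).trace = (((c:ℝ)):ℂ) * (((c:ℝ)):ℂ) := by
    rw [hPA, hPB, myMul, Matrix.trace_smul, myTrace, dot_AB p n hp0 hp1, dot_BA p n hp0 hp1,
      smul_eq_mul, hc]
  have e3 : (PB * PA).trace = (((c:ℝ)):ℂ) * (((c:ℝ)):ℂ) := by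
    rw [hPB, hPA, myMul, Matrix.trace_smul, myTrace, dot_BA p n hp0 hp1, dot_AB p n hp0 hp1,
      smul_eq_mul, hc]
  have etr : ((PA + PB) * (PA + PB)).trace = 1 + (((c:ℝ)):ℂ) * (((c:ℝ)):ℂ)
      + ((((c:ℝ)):ℂ) * (((c:ℝ)):ℂ) + 1) := by
    rw [Matrix.add_mul, Matrix.mul_add, Matrix.mul_add, Matrix.trace_add, Matrix.trace_add,
      Matrix.trace_add, e1, e2, e3, e4]
    try ring
  have etrE : ((((t:ℝ):ℂ) • (PA + PB)).trace) = ((t:ℝ):ℂ) * 2 := by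
    rw [Matrix.trace_smul, Matrix.trace_add, hPA, hPB, myTrace, myTrace,
      dot_AA p n hp0 hp1, dot_BB p n hp0 hp1, smul_eq_mul]
    ring
  refine ⟨((t:ℝ):ℂ) • (PA + PB), herm_E _ _ t, psd_E _ _ t ht0,
    psd_one_sub_E _ _ c t (dot_AA p n hp0 hp1) (dot_BB p n hp0 hp1)
      (dot_AB p n hp0 hp1) (dot_BA p n hp0 hp1) ht0 (le_of_eq ht1), ?_, ?_⟩
  · -- type-I error constraint
    have hval : ((twirl (mpow n (projv (qubitR p))) * (((t:ℝ):ℂ) • (PA + PB))).trace)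
        = ((t * (1 + c^2) : ℝ) : ℂ) := by
      rw [hσ0, Matrix.smul_mul, Matrix.mul_smul, Matrix.trace_smul, Matrix.trace_smul, etr,
        smul_eq_mul, smul_eq_mul]
      push_cast
      ring
    rw [hval, Complex.ofReal_re]
    exact hgood
  · -- value of type-II error
    have hval : ((twirl (mpow n mmix) * (((t:ℝ):ℂ) • (PA + PB))).trace)
        = ((((2:ℝ)⁻¹)^n * (2 * t) : ℝ) : ℂ) := by
      rw [twirl_mmix, Matrix.smul_mul, Matrix.one_mul, Matrix.trace_smul, etrE, smul_eq_mul]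
      push_cast
      ring
    rw [hval, Complex.ofReal_re]

end main

/-- For ρ₀ = |ψ⟩⟨ψ| with |ψ⟩ = √p|0⟩+√(1-p)|1⟩, p ∈ (0,1), and
ρ₁ = ½I, the hypothesis testing relative entropy under ℤ₂-invariant measurements
satisfies lim_{n→∞} D_H^ε(Z[ρ₀^{⊗n}] ‖ Z[ρ₁^{⊗n}]) / n = 1, where
D_H^ε = −log₂ β_n(ε) and β_n(ε) is the minimal type-II error probability. -/
theorem relative_entropy_rate_pure_vs_mixed (p ε : ℝ) (hp : p ∈ Set.Ioo (0 : ℝ) 1)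
    (hε : ε ∈ Set.Ioo (0 : ℝ) 1) :
    Tendsto (fun n : ℕ =>
        (- Real.logb 2
          (sInf (errSet n (twirl (mpow n (projv (qubitR p)))) (twirl (mpow n mmix)) ε))) /
        (n : ℝ))
      atTop (nhds 1) := by
  obtain ⟨hp0, hp1⟩ := hp
  obtain ⟨hε0, hε1⟩ := hε
  have hp0' : (0:ℝ) ≤ p := hp0.le
  have hp1' : p ≤ 1 := hp1.le
  have h1ε : (0:ℝ) < 1 - ε := by linarith
  have hq : |2*p-1| < 1 := by rw [abs_lt]; constructor <;> nlinarith
  have hc0 : Tendsto (fun n : ℕ => |2*p-1|^n) atTop (nhds 0) :=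
    tendsto_pow_atTop_nhds_zero_of_lt_one (abs_nonneg _) hq
  have hev : ∀ᶠ n : ℕ in atTop, |2*p-1|^n < ε := hc0.eventually_lt_const hε0
  have hev1 : ∀ᶠ n : ℕ in atTop, 1 ≤ n := eventually_ge_atTop 1
  have hbound : ∀ᶠ n : ℕ in atTop,
      ((n:ℝ) - 1)/(n:ℝ)
        ≤ (- Real.logb 2
            (sInf (errSet n (twirl (mpow n (projv (qubitR p)))) (twirl (mpow n mmix)) ε))) / (n:ℝ)
      ∧ (- Real.logb 2
            (sInf (errSet n (twirl (mpow n (projv (qubitR p)))) (twirl (mpow n mmix)) ε))) / (n:ℝ)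
        ≤ ((n:ℝ) - Real.logb 2 (1-ε))/(n:ℝ) := by
    filter_upwards [hev, hev1] with n hcn hn1
    set S := errSet n (twirl (mpow n (projv (qubitR p)))) (twirl (mpow n mmix)) ε with hS
    set c : ℝ := (2*p-1)^n with hc
    have hcabs : |c| = |2*p-1|^n := by rw [hc, _root_.abs_pow]
    have hcε : |c| < ε := by rw [hcabs]; exact hcn
    have hcnn : 0 ≤ |c| := abs_nonneg _
    have hcpos : (0:ℝ) < 1 + |c| := by positivity
    set t : ℝ := (1 + |c|)⁻¹ with ht
    have ht0 : 0 < t := by rw [ht]; positivity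
    have hgood : 1 - ε ≤ t * (1 + c^2) := by
      have h1 : t * (1 + c^2) = (1 + c^2)/(1 + |c|) := by
        rw [div_eq_mul_inv, mul_comm, ht]
      rw [h1, le_div_iff₀ hcpos]
      nlinarith [sq_nonneg c, _root_.sq_abs c]
    have hmem : ((2:ℝ)⁻¹)^n * (2 * t) ∈ S := errSet_mem p ε hp0' hp1' hε1 n hgood
    have hlb : ∀ x ∈ S, (1 - ε) * ((2:ℝ)⁻¹)^n ≤ x := fun x hx => errSet_lb p ε hp0' hp1' n x hx
    have hbdd : BddBelow S := ⟨(1 - ε) * ((2:ℝ)⁻¹)^n, fun x hx => hlb x hx⟩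
    have hne : S.Nonempty := ⟨_, hmem⟩
    have hInf_lb : (1 - ε) * ((2:ℝ)⁻¹)^n ≤ sInf S := le_csInf hne hlb
    have hInf_ub : sInf S ≤ ((2:ℝ)⁻¹)^n * (2 * t) := csInf_le hbdd hmem
    have h2pos : (0:ℝ) < ((2:ℝ)⁻¹)^n := by positivity
    have hub2 : ((2:ℝ)⁻¹)^n * (2 * t) ≤ 2 * ((2:ℝ)⁻¹)^n := by
      have htle : t ≤ 1 := by
        rw [ht]
        rw [inv_le_one_iff₀]
        right; linarith
      nlinarith
    have hpos : 0 < sInf S := lt_of_lt_of_le (by positivity) hInf_lb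
    have hlogpow : Real.logb 2 (((2:ℝ)⁻¹)^n) = -(n:ℝ) := by
      rw [Real.logb_pow, Real.logb_inv, Real.logb_self_eq_one (by norm_num)]
      ring
    have l1 : Real.logb 2 (sInf S) ≤ 1 - (n:ℝ) := by
      have := Real.logb_le_logb_of_le (one_lt_two) hpos (le_trans hInf_ub hub2)
      rwa [Real.logb_mul (by norm_num) (ne_of_gt h2pos), Real.logb_self_eq_one (by norm_num),
        hlogpow] at this
    have l2 : Real.logb 2 (1 - ε) - (n:ℝ) ≤ Real.logb 2 (sInf S) := by
      have := Real.logb_le_logb_of_le (one_lt_two) (by positivity) hInf_lb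
      rwa [Real.logb_mul (ne_of_gt h1ε) (ne_of_gt h2pos), hlogpow] at this
    have hnpos : (0:ℝ) < (n:ℝ) := by exact_mod_cast Nat.lt_of_lt_of_le Nat.zero_lt_one hn1
    constructor
    · apply div_le_div_of_nonneg_right ?_ hnpos.le <;> try linarith
    · apply div_le_div_of_nonneg_right ?_ hnpos.le <;> try linarith
  have tend_aux : ∀ a : ℝ, Tendsto (fun n : ℕ => ((n:ℝ) - a)/(n:ℝ)) atTop (nhds 1) := by
    intro a
    have h1 : Tendsto (fun n : ℕ => 1 - a * ((n:ℝ))⁻¹) atTop (nhds 1) := by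
      have h2 : Tendsto (fun n : ℕ => ((n:ℝ))⁻¹) atTop (nhds 0) := tendsto_inv_atTop_zero.comp
        tendsto_natCast_atTop_atTop
      have h3 := (tendsto_const_nhds (x := a)).mul h2
      rw [mul_zero] at h3
      have h4 := (tendsto_const_nhds (x := (1:ℝ))).sub h3
      rwa [sub_zero] at h4
    refine h1.congr' ?_
    filter_upwards [eventually_ge_atTop 1] with n hn
    have hnpos : (0:ℝ) < (n:ℝ) := by exact_mod_cast Nat.lt_of_lt_of_le Nat.zero_lt_one hn
    field_simp
  exact tendsto_of_tendsto_of_tendsto_of_le_of_le' (tend_aux 1) (tend_aux (Real.logb 2 (1-ε)))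
    (hbound.mono fun n h => h.1) (hbound.mono fun n h => h.2)
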